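/- arXiv:2208.04789 — 3 statements merged into one kernel-verified Lean document; each statement's English description precedes it below -/
import Mathlib

section
/- A bipartite pure density matrix ρ = |ψ⟩⟨ψ| on ℂ^{d_A} ⊗ ℂ^{d_B} is a product state, i.e., ρ = ρ_A ⊗ ρ_B where ρ_A and ρ_B are its partial traces, if and only if its correlation coefficients factorize: λ_{ij}^{kl} = α_{ij}·β_{kl} for all (i,j) ≠ (0,0) and (k,l) ≠ (0,0), where α_{ij} = Tr(ρ·(W_{ij}^† ⊗ I)), β_{kl} = Tr(ρ·(I ⊗ W_{kl}^†)), and λ_{ij}^{kl} = Tr(ρ·(W_{ij}^† ⊗ W_{kl}^†)), with ⊗ the Kronecker product. -/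
open scoped Matrix ComplexOrder Kronecker
open Complex Finset

set_option linter.unusedSectionVars false
set_option linter.unusedVariables false

/-- The Weyl operator `W_{n m}` on a `d`-dimensional Hilbert space:
`(W_{n m})_{k, k'} = exp(2πi·k·n/d)` if `k' = k + m` (mod `d`), and `0` otherwise. -/
noncomputable def Weyl (d : ℕ) (n m : ZMod d) : Matrix (ZMod d) (ZMod d) ℂ :=
  Matrix.of fun k k' =>
    if k' = k + m then Complex.exp (2 * Real.pi * Complex.I * (k.val * n.val : ℕ) / d) else 0


section WeylAux

noncomputable def zet (d : ℕ) : ℂ := Complex.exp (2 * Real.pi * Complex.I / d)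

set_option linter.unusedSectionVars false
variable {d : ℕ} [NeZero d]

lemma zet_pow_d : zet d ^ d = 1 := by
  rw [zet, ← Complex.exp_nat_mul]
  rw [show (d:ℂ) * (2 * Real.pi * Complex.I / d) = 2 * Real.pi * Complex.I by
    rw [mul_comm]; field_simp; exact div_self (Nat.cast_ne_zero.2 (NeZero.ne d))]
  exact Complex.exp_two_pi_mul_I

lemma zet_pow_mod (e : ℕ) : zet d ^ e = zet d ^ (e % d) := by
  conv_lhs => rw [← Nat.div_add_mod e d]
  rw [pow_add, pow_mul, zet_pow_d, one_pow, one_mul]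

noncomputable def chi (d : ℕ) (x : ZMod d) : ℂ := zet d ^ x.val

lemma zet_pow_eq_chi (e : ℕ) : zet d ^ e = chi d (e : ZMod d) := by
  rw [chi, ZMod.val_natCast, ← zet_pow_mod]

lemma chi_add (x y : ZMod d) : chi d (x + y) = chi d x * chi d y := by
  rw [chi, chi, chi, ← pow_add, ZMod.val_add, ← zet_pow_mod]

lemma zet_norm : ‖zet d‖ = 1 := by
  rw [zet]
  rw [show 2 * Real.pi * Complex.I / d = ((2 * Real.pi / d : ℝ) : ℂ) * Complex.I by push_cast; ring]
  exact Complex.norm_exp_ofReal_mul_I _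

lemma chi_ne_zero (x : ZMod d) : chi d x ≠ 0 := pow_ne_zero _ (Complex.exp_ne_zero _)

lemma conj_chi (x : ZMod d) : (starRingEnd ℂ) (chi d x) = chi d (-x) := by
  have h1 : chi d x * chi d (-x) = 1 := by rw [← chi_add, add_neg_cancel, chi, ZMod.val_zero, pow_zero]
  have h2 : chi d x * (starRingEnd ℂ) (chi d x) = 1 := by
    rw [Complex.mul_conj]
    norm_cast
    rw [Complex.normSq_eq_norm_sq]
    have : ‖chi d x‖ = 1 := by
      rw [chi]
      simp [map_pow, zet_norm]
    rw [this]; norm_num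
  have := h1.trans h2.symm
  exact (mul_left_cancel₀ (chi_ne_zero x) this).symm

lemma sum_val_eq_range (f : ℕ → ℂ) : ∑ n : ZMod d, f n.val = ∑ i ∈ Finset.range d, f i := by
  refine Finset.sum_nbij' (fun n : ZMod d => n.val) (fun i : ℕ => (i : ZMod d)) ?_ ?_ ?_ ?_ ?_
  · intro a _; exact Finset.mem_range.2 (ZMod.val_lt a)
  · intro a _; exact Finset.mem_univ _
  · intro a _; exact ZMod.natCast_zmod_val a
  · intro a ha; exact ZMod.val_cast_of_lt (Finset.mem_range.1 ha)
  · intro a _; rfl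

lemma sum_chi (c : ZMod d) : ∑ n : ZMod d, chi d (c * n) = if c = 0 then (d : ℂ) else 0 := by
  by_cases hc : c = 0
  · simp [hc, chi, ZMod.val_zero, ZMod.card]
  · rw [if_neg hc]
    have hrw : ∀ n : ZMod d, chi d (c * n) = (chi d c) ^ n.val := by
      intro n
      rw [chi, chi, ZMod.val_mul, ← zet_pow_mod, pow_mul]
    simp_rw [hrw]
    rw [sum_val_eq_range (fun i => (chi d c) ^ i)]
    have hne : chi d c ≠ 1 := by
      intro h
      have hprim := Complex.isPrimitiveRoot_exp d (NeZero.ne d)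
      rw [chi] at h
      have hdvd := (hprim.pow_eq_one_iff_dvd c.val).1 h
      have := Nat.eq_zero_of_dvd_of_lt hdvd (ZMod.val_lt c)
      exact hc ((ZMod.val_eq_zero c).mp this)
    rw [geom_sum_eq hne]
    have : chi d c ^ d = 1 := by rw [chi, ← pow_mul, mul_comm, pow_mul, zet_pow_d, one_pow]
    rw [this, sub_self, zero_div]

lemma weyl_apply (n m k k' : ZMod d) :
    Weyl d n m k k' = if k' = k + m then chi d (n * k) else 0 := by
  rw [Weyl]
  simp only [Matrix.of_apply]
  congr 1
  rw [show 2 * Real.pi * Complex.I * ((k.val * n.val : ℕ) : ℂ) / d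
      = ((k.val * n.val : ℕ) : ℂ) * (2 * Real.pi * Complex.I / d) by ring,
    Complex.exp_nat_mul, ← zet, zet_pow_eq_chi]
  congr 1
  push_cast [ZMod.natCast_zmod_val]
  ring

lemma weyl_zero : Weyl d 0 0 = 1 := by
  ext k k'
  rw [weyl_apply, Matrix.one_apply]
  simp [eq_comm, chi, ZMod.val_zero]

variable {dA dB : ℕ} [NeZero dA] [NeZero dB]

lemma trace_bip (M : Matrix (ZMod dA × ZMod dB) (ZMod dA × ZMod dB) ℂ)
    (n m : ZMod dA) (k l : ZMod dB) :
    Matrix.trace (M * ((Weyl dA n m)ᴴ ⊗ₖ (Weyl dB k l)ᴴ)) =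
      ∑ a : ZMod dA, ∑ b : ZMod dB, M (a, b) (a + m, b + l) *
        ((starRingEnd ℂ) (chi dA (n * a)) * (starRingEnd ℂ) (chi dB (k * b))) := by
  simp only [Matrix.trace, Matrix.diag, Matrix.mul_apply, Matrix.kroneckerMap_apply,
    Matrix.conjTranspose_apply, weyl_apply, Fintype.sum_prod_type]
  simp only [apply_ite (star : ℂ → ℂ), star_zero, ite_mul, zero_mul, mul_ite, mul_zero,
    Finset.sum_ite_eq', Finset.mem_univ, if_true]
  simp only [Complex.star_def]

lemma sum4_swap {α β γ δ : Type*} [Fintype α] [Fintype β] [Fintype γ] [Fintype δ]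
    (f : α → β → γ → δ → ℂ) :
    ∑ a, ∑ b, ∑ c, ∑ e, f a b c e = ∑ c, ∑ e, ∑ a, ∑ b, f a b c e := by
  have h1 : ∀ a : α, ∑ b, ∑ c, ∑ e, f a b c e = ∑ c : γ, ∑ b, ∑ e, f a b c e :=
    fun a => Finset.sum_comm
  simp_rw [h1]
  rw [Finset.sum_comm]
  have h2 : ∀ (c : γ) (a : α), ∑ b, ∑ e, f a b c e = ∑ e : δ, ∑ b, f a b c e :=
    fun c a => Finset.sum_comm
  simp_rw [h2]
  exact Finset.sum_congr rfl fun c _ => Finset.sum_comm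

lemma weyl_complete (M : Matrix (ZMod dA × ZMod dB) (ZMod dA × ZMod dB) ℂ)
    (h : ∀ (n m : ZMod dA) (k l : ZMod dB),
      Matrix.trace (M * ((Weyl dA n m)ᴴ ⊗ₖ (Weyl dB k l)ᴴ)) = 0) : M = 0 := by
  ext ⟨a₀, b₀⟩ ⟨a₁, b₁⟩
  have key : (dA : ℂ) * ((dB : ℂ) * M (a₀, b₀) (a₁, b₁)) = 0 := by
    have hS : ∑ n : ZMod dA, ∑ k : ZMod dB, chi dA (n * a₀) * chi dB (k * b₀) *
        Matrix.trace (M * ((Weyl dA n (a₁ - a₀))ᴴ ⊗ₖ (Weyl dB k (b₁ - b₀))ᴴ)) = 0 := by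
      simp [h]
    calc (dA : ℂ) * ((dB : ℂ) * M (a₀, b₀) (a₁, b₁))
        = ∑ a : ZMod dA, ∑ b : ZMod dB,
            (if a = a₀ then (dA : ℂ) else 0) * ((if b = b₀ then (dB : ℂ) else 0) *
              M (a, b) (a + (a₁ - a₀), b + (b₁ - b₀))) := by
          simp [Finset.sum_ite_eq', add_sub_cancel]
      _ = ∑ a : ZMod dA, ∑ b : ZMod dB,
            (∑ n : ZMod dA, chi dA (n * a₀) * (starRingEnd ℂ) (chi dA (n * a))) *
              ((∑ k : ZMod dB, chi dB (k * b₀) * (starRingEnd ℂ) (chi dB (k * b))) *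
                M (a, b) (a + (a₁ - a₀), b + (b₁ - b₀))) := by
          refine Finset.sum_congr rfl fun a _ => Finset.sum_congr rfl fun b _ => ?_
          have e1 : ∑ n : ZMod dA, chi dA (n * a₀) * (starRingEnd ℂ) (chi dA (n * a))
              = if a = a₀ then (dA : ℂ) else 0 := by
            have : ∀ n : ZMod dA, chi dA (n * a₀) * (starRingEnd ℂ) (chi dA (n * a))
                = chi dA ((a₀ - a) * n) := by
              intro n
              rw [conj_chi, ← chi_add]
              congr 1
              ring
            simp_rw [this, sum_chi]
            simp [sub_eq_zero, eq_comm]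
          have e2 : ∑ k : ZMod dB, chi dB (k * b₀) * (starRingEnd ℂ) (chi dB (k * b))
              = if b = b₀ then (dB : ℂ) else 0 := by
            have : ∀ k : ZMod dB, chi dB (k * b₀) * (starRingEnd ℂ) (chi dB (k * b))
                = chi dB ((b₀ - b) * k) := by
              intro k
              rw [conj_chi, ← chi_add]
              congr 1
              ring
            simp_rw [this, sum_chi]
            simp [sub_eq_zero, eq_comm]
          rw [e1, e2]
      _ = ∑ a : ZMod dA, ∑ b : ZMod dB, ∑ n : ZMod dA, ∑ k : ZMod dB,
            chi dA (n * a₀) * chi dB (k * b₀) *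
              (M (a, b) (a + (a₁ - a₀), b + (b₁ - b₀)) *
                ((starRingEnd ℂ) (chi dA (n * a)) * (starRingEnd ℂ) (chi dB (k * b)))) := by
          refine Finset.sum_congr rfl fun a _ => Finset.sum_congr rfl fun b _ => ?_
          rw [← mul_assoc, Finset.sum_mul_sum]
          simp_rw [Finset.sum_mul]
          exact Finset.sum_congr rfl fun n _ => Finset.sum_congr rfl fun k _ => by ring
      _ = ∑ n : ZMod dA, ∑ k : ZMod dB, ∑ a : ZMod dA, ∑ b : ZMod dB,
            chi dA (n * a₀) * chi dB (k * b₀) *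
              (M (a, b) (a + (a₁ - a₀), b + (b₁ - b₀)) *
                ((starRingEnd ℂ) (chi dA (n * a)) * (starRingEnd ℂ) (chi dB (k * b)))) :=
          (sum4_swap _).symm
      _ = ∑ n : ZMod dA, ∑ k : ZMod dB, chi dA (n * a₀) * chi dB (k * b₀) *
            Matrix.trace (M * ((Weyl dA n (a₁ - a₀))ᴴ ⊗ₖ (Weyl dB k (b₁ - b₀))ᴴ)) := by
          refine Finset.sum_congr rfl fun n _ => Finset.sum_congr rfl fun k _ => ?_
          rw [trace_bip, Finset.mul_sum]
          exact Finset.sum_congr rfl fun a _ => (Finset.mul_sum _ _ _).symm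
      _ = 0 := hS
  have hdA : (dA : ℂ) ≠ 0 := Nat.cast_ne_zero.2 (NeZero.ne dA)
  have hdB : (dB : ℂ) ≠ 0 := Nat.cast_ne_zero.2 (NeZero.ne dB)
  have := (mul_eq_zero.1 key).resolve_left hdA
  have := (mul_eq_zero.1 this).resolve_left hdB
  simpa using this

lemma trace_kron_one (ρ : Matrix (ZMod dA × ZMod dB) (ZMod dA × ZMod dB) ℂ)
    (X : Matrix (ZMod dA) (ZMod dA) ℂ) :
    Matrix.trace (ρ * (X ⊗ₖ (1 : Matrix (ZMod dB) (ZMod dB) ℂ))) =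
      Matrix.trace ((Matrix.of fun i i' : ZMod dA => ∑ j : ZMod dB, ρ (i, j) (i', j)) * X) := by
  simp only [Matrix.trace, Matrix.diag, Matrix.mul_apply, Matrix.kroneckerMap_apply,
    Matrix.of_apply, Matrix.one_apply, Fintype.sum_prod_type, mul_ite, mul_one, mul_zero,
    ite_mul, zero_mul, Finset.sum_ite_eq', Finset.mem_univ, if_true, Finset.sum_mul]
  exact Finset.sum_congr rfl fun a _ => Finset.sum_comm

lemma trace_one_kron (ρ : Matrix (ZMod dA × ZMod dB) (ZMod dA × ZMod dB) ℂ)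
    (Y : Matrix (ZMod dB) (ZMod dB) ℂ) :
    Matrix.trace (ρ * ((1 : Matrix (ZMod dA) (ZMod dA) ℂ) ⊗ₖ Y)) =
      Matrix.trace ((Matrix.of fun j j' : ZMod dB => ∑ i : ZMod dA, ρ (i, j) (i, j')) * Y) := by
  simp only [Matrix.trace, Matrix.diag, Matrix.mul_apply, Matrix.kroneckerMap_apply,
    Matrix.of_apply, Matrix.one_apply, Fintype.sum_prod_type, mul_ite, mul_one, mul_zero,
    ite_mul, zero_mul, Finset.sum_mul, one_mul]
  have hx : ∀ (x : ZMod dA) (x1 : ZMod dB), (∑ x2 : ZMod dA, ∑ x3 : ZMod dB,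
      if x2 = x then ρ (x, x1) (x2, x3) * Y x3 x1 else 0)
      = ∑ x3 : ZMod dB, ρ (x, x1) (x, x3) * Y x3 x1 := by
    intro x x1
    rw [Finset.sum_comm]
    simp
  simp_rw [hx]
  rw [Finset.sum_comm]
  exact Finset.sum_congr rfl fun x1 _ => Finset.sum_comm

lemma trace_kron_mul (A : Matrix (ZMod dA) (ZMod dA) ℂ) (B : Matrix (ZMod dB) (ZMod dB) ℂ)
    (X : Matrix (ZMod dA) (ZMod dA) ℂ) (Y : Matrix (ZMod dB) (ZMod dB) ℂ) :
    Matrix.trace ((A ⊗ₖ B) * (X ⊗ₖ Y)) = Matrix.trace (A * X) * Matrix.trace (B * Y) := by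
  rw [← Matrix.mul_kronecker_mul, Matrix.trace_kronecker]

end WeylAux

/-- a bipartite pure density matrix `ρ = |ψ⟩⟨ψ|` is a product state
`ρ = ρ_A ⊗ ρ_B` (partial traces) iff its correlation coefficients factorize:
`λ_{ij}^{kl} = α_{ij} β_{kl}` for all `(i,j) ≠ 0`, `(k,l) ≠ 0`. -/
theorem pure_product_iff_corr_factorizes (dA dB : ℕ) [NeZero dA] [NeZero dB]
    (hA : 2 ≤ dA) (hB : 2 ≤ dB)
    (ψ : ZMod dA × ZMod dB → ℂ) (hψ : ∑ x, ‖ψ x‖ ^ 2 = 1)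
    (ρ : Matrix (ZMod dA × ZMod dB) (ZMod dA × ZMod dB) ℂ)
    (hρ : ρ = Matrix.vecMulVec ψ (star ψ)) :
    ρ = (Matrix.of fun i i' : ZMod dA => ∑ j : ZMod dB, ρ (i, j) (i', j)) ⊗ₖ
          (Matrix.of fun j j' : ZMod dB => ∑ i : ZMod dA, ρ (i, j) (i, j')) ↔
    ∀ p : ZMod dA × ZMod dA, p ≠ 0 → ∀ q : ZMod dB × ZMod dB, q ≠ 0 →
      Matrix.trace (ρ * ((Weyl dA p.1 p.2)ᴴ ⊗ₖ (Weyl dB q.1 q.2)ᴴ)) =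
        Matrix.trace (ρ * ((Weyl dA p.1 p.2)ᴴ ⊗ₖ (1 : Matrix (ZMod dB) (ZMod dB) ℂ))) *
          Matrix.trace (ρ * ((1 : Matrix (ZMod dA) (ZMod dA) ℂ) ⊗ₖ (Weyl dB q.1 q.2)ᴴ)) := by
  classical
  have htrρ : Matrix.trace ρ = 1 := by
    rw [hρ]
    have : ∀ x : ZMod dA × ZMod dB, ψ x * star (ψ x) = ((‖ψ x‖ ^ 2 : ℝ) : ℂ) := by
      intro x
      rw [Complex.star_def, Complex.mul_conj, Complex.normSq_eq_norm_sq]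
    simp only [Matrix.trace, Matrix.diag, Matrix.vecMulVec_apply, Pi.star_apply, this]
    rw [← Complex.ofReal_sum]
    rw [hψ]
    norm_num
  have htrA : Matrix.trace
      (Matrix.of fun i i' : ZMod dA => ∑ j : ZMod dB, ρ (i, j) (i', j)) = 1 := by
    rw [← htrρ]
    simp [Matrix.trace, Matrix.diag, Fintype.sum_prod_type]
  have htrB : Matrix.trace
      (Matrix.of fun j j' : ZMod dB => ∑ i : ZMod dA, ρ (i, j) (i, j')) = 1 := by
    rw [← htrρ]
    simp only [Matrix.trace, Matrix.diag, Matrix.of_apply, Fintype.sum_prod_type]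
    exact Finset.sum_comm
  constructor
  · intro hfac p hp q hq
    rw [hfac, trace_kron_mul, trace_kron_mul, trace_kron_mul, Matrix.mul_one, Matrix.mul_one,
      htrA, htrB, mul_one, one_mul]
  · intro h
    have hz : ∀ (n m : ZMod dA) (k l : ZMod dB),
        Matrix.trace ((ρ -
            (Matrix.of fun i i' : ZMod dA => ∑ j : ZMod dB, ρ (i, j) (i', j)) ⊗ₖ
              (Matrix.of fun j j' : ZMod dB => ∑ i : ZMod dA, ρ (i, j) (i, j'))) *
          ((Weyl dA n m)ᴴ ⊗ₖ (Weyl dB k l)ᴴ)) = 0 := by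
      intro n m k l
      rw [Matrix.sub_mul, Matrix.trace_sub, sub_eq_zero, trace_kron_mul]
      by_cases hp : (n, m) = (0 : ZMod dA × ZMod dA)
      · have hn : n = 0 := congrArg Prod.fst hp
        have hm : m = 0 := congrArg Prod.snd hp
        subst hn; subst hm
        rw [weyl_zero, Matrix.conjTranspose_one, Matrix.mul_one, htrA, one_mul,
          trace_one_kron]
      · by_cases hq : (k, l) = (0 : ZMod dB × ZMod dB)
        · have hk : k = 0 := congrArg Prod.fst hq
          have hl : l = 0 := congrArg Prod.snd hq
          subst hk; subst hl
          rw [weyl_zero, Matrix.conjTranspose_one, Matrix.mul_one, htrB, mul_one,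
            trace_kron_one]
        · have := h (n, m) hp (k, l) hq
          rw [trace_kron_one, trace_one_kron] at this
          exact this
    have := weyl_complete _ hz
    rw [sub_eq_zero] at this
    exact this
end

section
/- If a bipartite density matrix ρ on ℂ^{d_A} ⊗ ℂ^{d_B} is separable, then the Ky Fan (trace) norm of its correlation matrix satisfies ‖M‖_KF ≤ √((d_A − 1)(d_B − 1)). -/
open scoped Matrix ComplexOrder Kronecker

/-- The positive semidefinite square root of a positive semidefinite matrix
(the definition removed from Mathlib, restated with its old meaning). -/
noncomputable def Matrix.PosSemidef.sqrt {n 𝕜 : Type*} [Fintype n] [DecidableEq n] [RCLike 𝕜]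
    {A : Matrix n n 𝕜} (hA : A.PosSemidef) : Matrix n n 𝕜 :=
  hA.1.eigenvectorUnitary.1 * Matrix.diagonal ((↑) ∘ (√·) ∘ hA.1.eigenvalues) *
  (star hA.1.eigenvectorUnitary : Matrix n n 𝕜)

/-- The Ky Fan (trace) norm `‖M‖_KF = Tr √(M†M)`, the sum of the singular values of `M`. -/
noncomputable def kyFanNorm {m n : Type*} [Fintype m] [Fintype n] [DecidableEq n]
    (M : Matrix m n ℂ) : ℝ :=
  (Matrix.trace (Matrix.posSemidef_conjTranspose_mul_self M).sqrt).re

/-- A bipartite density matrix is separable if it is a finite convex combination of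
Kronecker products of density matrices. -/
def SeparableState (dA dB : ℕ) [NeZero dA] [NeZero dB]
    (ρ : Matrix (ZMod dA × ZMod dB) (ZMod dA × ZMod dB) ℂ) : Prop :=
  ∃ (N : ℕ) (w : Fin N → ℝ) (A : Fin N → Matrix (ZMod dA) (ZMod dA) ℂ)
      (B : Fin N → Matrix (ZMod dB) (ZMod dB) ℂ),
    (∀ s, 0 ≤ w s) ∧ (∑ s, w s) = 1 ∧
    (∀ s, (A s).PosSemidef ∧ (A s).trace = 1) ∧
    (∀ s, (B s).PosSemidef ∧ (B s).trace = 1) ∧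
    ρ = ∑ s, (w s : ℂ) • (A s ⊗ₖ B s)

/-- The correlation matrix of a bipartite state relative to the Weyl basis:
`M_{(i,j),(k,l)} = Tr(ρ · (W_{ij}^† ⊗ W_{kl}^†))` for `(i,j) ≠ 0`, `(k,l) ≠ 0`. -/
noncomputable def corrMatrix (dA dB : ℕ) [NeZero dA] [NeZero dB]
    (ρ : Matrix (ZMod dA × ZMod dB) (ZMod dA × ZMod dB) ℂ) :
    Matrix {p : ZMod dA × ZMod dA // p ≠ 0} {q : ZMod dB × ZMod dB // q ≠ 0} ℂ :=
  Matrix.of fun p q =>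
    Matrix.trace (ρ * ((Weyl dA p.1.1 p.1.2)ᴴ ⊗ₖ (Weyl dB q.1.1 q.1.2)ᴴ))


section Aux
open Complex Finset

lemma sum_zmod_val {d : ℕ} [NeZero d] (f : ℕ → ℂ) :
    ∑ n : ZMod d, f (ZMod.val n) = ∑ j ∈ Finset.range d, f j := by
  refine Finset.sum_nbij' (fun n => ZMod.val n) (fun j => (j : ZMod d)) ?_ ?_ ?_ ?_ ?_
  · intro n _; exact Finset.mem_range.mpr (ZMod.val_lt n)
  · intro j _; exact Finset.mem_univ _
  · intro n _; exact ZMod.natCast_zmod_val n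
  · intro j hj; exact ZMod.val_cast_of_lt (Finset.mem_range.mp hj)
  · intro n _; rfl

lemma fourier_orth {d : ℕ} [NeZero d] (a a' : ZMod d) :
    ∑ n : ZMod d, Complex.exp (2 * Real.pi * Complex.I * (a'.val * n.val : ℕ) / d) *
      (starRingEnd ℂ) (Complex.exp (2 * Real.pi * Complex.I * (a.val * n.val : ℕ) / d)) =
      if a' = a then (d : ℂ) else 0 := by
  have hd : (d : ℂ) ≠ 0 := Nat.cast_ne_zero.mpr (NeZero.ne d)
  set m : ℤ := (a'.val : ℤ) - (a.val : ℤ) with hm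
  set ζ : ℂ := Complex.exp (2 * Real.pi * Complex.I * (m : ℂ) / d) with hζ
  have hterm : ∀ n : ZMod d,
      Complex.exp (2 * Real.pi * Complex.I * (a'.val * n.val : ℕ) / d) *
      (starRingEnd ℂ) (Complex.exp (2 * Real.pi * Complex.I * (a.val * n.val : ℕ) / d)) =
      ζ ^ (n.val) := by
    intro n
    rw [hζ, ← Complex.exp_nat_mul, ← Complex.exp_conj, ← Complex.exp_add]
    congr 1
    simp only [map_div₀, map_mul, Complex.conj_I, Complex.conj_ofReal, map_natCast, map_ofNat]
    push_cast [hm]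
    ring
  rw [Finset.sum_congr rfl (fun n _ => hterm n), sum_zmod_val (f := fun j => ζ ^ j)]
  by_cases h : a' = a
  · subst h
    have : ζ = 1 := by
      rw [hζ, hm]
      simp
    simp [this]
  · have hmne : m ≠ 0 := by
      rw [hm, sub_ne_zero]
      exact_mod_cast fun hc => h (ZMod.val_injective d (by exact_mod_cast hc))
    have hζd : ζ ^ d = 1 := by
      rw [hζ, ← Complex.exp_nat_mul]
      have : (d : ℂ) * (2 * Real.pi * Complex.I * (m : ℂ) / d) = (m : ℂ) * (2 * Real.pi * Complex.I) := by
        field_simp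
      rw [this, Complex.exp_int_mul_two_pi_mul_I]
    have hζ1 : ζ ≠ 1 := by
      rw [hζ, Ne, Complex.exp_eq_one_iff]
      rintro ⟨k, hk⟩
      have h2πI : (2 : ℂ) * Real.pi * Complex.I ≠ 0 := by
        simp [Real.pi_ne_zero, Complex.I_ne_zero]
      have hmc : (m : ℂ) = (k : ℂ) * d := by
        field_simp at hk
        refine mul_left_cancel₀ h2πI ?_
        linear_combination (2 * Real.pi * Complex.I) * hk
      have hmz : m = k * d := by exact_mod_cast hmc
      have hdvd : (d : ℤ) ∣ m := ⟨k, by linarith [hmz]⟩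
      have habs : |m| < d := by
        have h1 := ZMod.val_lt a
        have h2 := ZMod.val_lt a'
        rw [hm]; rw [abs_lt]; omega
      have := Int.le_of_dvd (abs_pos.mpr hmne) ((dvd_abs _ _).mpr hdvd)
      omega
    rw [geom_sum_eq hζ1, hζd, if_neg h]
    simp

lemma trace_mul_weyl {d : ℕ} [NeZero d] (X : Matrix (ZMod d) (ZMod d) ℂ) (n m : ZMod d) :
    Matrix.trace (X * (Weyl d n m)ᴴ) =
      ∑ a : ZMod d, X a (a + m) *
        (starRingEnd ℂ) (Complex.exp (2 * Real.pi * Complex.I * (a.val * n.val : ℕ) / d)) := by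
  simp only [Matrix.trace, Matrix.diag_apply, Matrix.mul_apply, Matrix.conjTranspose_apply,
    Weyl, Matrix.of_apply]
  refine Finset.sum_congr rfl fun a _ => ?_
  simp [apply_ite (starRingEnd ℂ), mul_ite, Finset.sum_ite_eq']

lemma trace_mul_weyl_zero {d : ℕ} [NeZero d] (X : Matrix (ZMod d) (ZMod d) ℂ) :
    Matrix.trace (X * (Weyl d 0 0)ᴴ) = Matrix.trace X := by
  rw [trace_mul_weyl]
  simp [Matrix.trace, Matrix.diag_apply]

lemma weyl_parseval {d : ℕ} [NeZero d] (X : Matrix (ZMod d) (ZMod d) ℂ) :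
    ∑ p : ZMod d × ZMod d, ‖Matrix.trace (X * (Weyl d p.1 p.2)ᴴ)‖ ^ 2 =
      d * ∑ a : ZMod d, ∑ b : ZMod d, ‖X a b‖ ^ 2 := by
  have hsq : ∀ z : ℂ, ((‖z‖ : ℂ)) ^ 2 = z * (starRingEnd ℂ) z := by
    intro z; rw [Complex.mul_conj]; norm_cast; exact Complex.sq_norm z
  apply Complex.ofReal_injective
  push_cast
  calc ∑ p : ZMod d × ZMod d, ((‖Matrix.trace (X * (Weyl d p.1 p.2)ᴴ)‖ : ℂ) ^ 2)
      = ∑ m : ZMod d, ∑ n : ZMod d, (Matrix.trace (X * (Weyl d n m)ᴴ)) *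
          (starRingEnd ℂ) (Matrix.trace (X * (Weyl d n m)ᴴ)) := by
        rw [Fintype.sum_prod_type, Finset.sum_comm]
        refine Finset.sum_congr rfl fun m _ => Finset.sum_congr rfl fun n _ => hsq _
    _ = ∑ m : ZMod d, ((d : ℂ) * ∑ a : ZMod d, X a (a + m) * (starRingEnd ℂ) (X a (a + m))) := by
        refine Finset.sum_congr rfl fun m _ => ?_
        calc ∑ n : ZMod d, (Matrix.trace (X * (Weyl d n m)ᴴ)) *
                (starRingEnd ℂ) (Matrix.trace (X * (Weyl d n m)ᴴ))
            = ∑ n : ZMod d, ∑ a, ∑ a', (X a (a + m) * (starRingEnd ℂ) (X a' (a' + m))) *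
                (Complex.exp (2 * Real.pi * Complex.I * (a'.val * n.val : ℕ) / d) *
                 (starRingEnd ℂ) (Complex.exp (2 * Real.pi * Complex.I * (a.val * n.val : ℕ) / d))) := by
              refine Finset.sum_congr rfl fun n _ => ?_
              rw [trace_mul_weyl, map_sum, Finset.sum_mul_sum]
              refine Finset.sum_congr rfl fun a _ => Finset.sum_congr rfl fun a' _ => ?_
              simp only [map_mul, Complex.conj_conj]
              ring
          _ = ∑ a, ∑ a', (X a (a + m) * (starRingEnd ℂ) (X a' (a' + m))) *
                ∑ n : ZMod d, (Complex.exp (2 * Real.pi * Complex.I * (a'.val * n.val : ℕ) / d) *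
                 (starRingEnd ℂ) (Complex.exp (2 * Real.pi * Complex.I * (a.val * n.val : ℕ) / d))) := by
              rw [Finset.sum_comm]
              refine Finset.sum_congr rfl fun a _ => ?_
              rw [Finset.sum_comm]
              exact Finset.sum_congr rfl fun a' _ => (Finset.mul_sum _ _ _).symm
          _ = (d : ℂ) * ∑ a : ZMod d, X a (a + m) * (starRingEnd ℂ) (X a (a + m)) := by
              simp only [fourier_orth, mul_ite, mul_zero]
              rw [Finset.mul_sum]
              refine Finset.sum_congr rfl fun a _ => ?_
              rw [Finset.sum_ite_eq' Finset.univ a]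
              simp [mul_comm]
    _ = (d : ℂ) * ∑ a : ZMod d, ∑ b : ZMod d, ((‖X a b‖ : ℂ) ^ 2) := by
        simp only [Finset.mul_sum]
        rw [Finset.sum_comm]
        refine Finset.sum_congr rfl fun a _ => ?_
        refine Fintype.sum_equiv (Equiv.addLeft a) _ _ fun m => ?_
        simp only [Equiv.coe_addLeft, hsq]

lemma csq {z : ℂ} : ((‖z‖ : ℂ)) ^ 2 = z * (starRingEnd ℂ) z := by
  rw [Complex.mul_conj]; norm_cast; exact Complex.sq_norm z

lemma trace_psd_sqrt {n : Type*} [Fintype n] [DecidableEq n] {A : Matrix n n ℂ}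
    (hA : A.PosSemidef) :
    (Matrix.trace hA.sqrt).re = ∑ i, Real.sqrt (hA.1.eigenvalues i) := by
  rw [Matrix.PosSemidef.sqrt, Matrix.trace_mul_comm, ← Matrix.mul_assoc,
    (Matrix.mem_unitaryGroup_iff'.mp hA.1.eigenvectorUnitary.2)]
  rw [Matrix.one_mul, Matrix.trace_diagonal]
  rw [Complex.re_sum]
  rfl

lemma frobenius_le_one {n : Type*} [Fintype n] [DecidableEq n] {X : Matrix n n ℂ}
    (hX : X.PosSemidef) (ht : X.trace = 1) :
    ∑ a : n, ∑ b : n, ‖X a b‖ ^ 2 ≤ 1 := by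
  set lam := hX.1.eigenvalues with hlam
  set U : Matrix n n ℂ := (hX.1.eigenvectorUnitary : Matrix n n ℂ) with hU
  have hUU : U * (star U) = 1 := Matrix.mem_unitaryGroup_iff.mp hX.1.eigenvectorUnitary.2
  have hD : (star U) * X * U = Matrix.diagonal (RCLike.ofReal ∘ lam) :=
    by have := hX.1.conjStarAlgAut_star_eigenvectorUnitary
       rw [Unitary.conjStarAlgAut_star_apply] at this; exact this
  have htrX : Matrix.trace X = ∑ i, (lam i : ℂ) := by
    have : Matrix.trace (Matrix.diagonal (RCLike.ofReal ∘ lam)) = Matrix.trace X := by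
      rw [← hD, Matrix.trace_mul_cycle, hUU, Matrix.one_mul]
    rw [← this, Matrix.trace_diagonal]
    rfl
  have h1 : ∑ i, lam i = 1 := by
    have : ((∑ i, lam i : ℝ) : ℂ) = 1 := by push_cast; rw [← htrX, ht]
    exact_mod_cast this
  have hXX : Matrix.trace (X * X) = ∑ i, ((lam i : ℂ)) ^ 2 := by
    have key : (star U * X * U) * (star U * X * U) = star U * (X * X) * U := by
      have h2 : U * star U = 1 := hUU
      calc (star U * X * U) * (star U * X * U)
          = star U * X * (U * star U) * X * U := by
            simp only [Matrix.mul_assoc]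
        _ = star U * (X * X) * U := by rw [h2]; simp only [Matrix.mul_assoc, Matrix.one_mul]
    have : Matrix.trace ((star U * X * U) * (star U * X * U)) = Matrix.trace (X * X) := by
      rw [key, Matrix.trace_mul_cycle, hUU, Matrix.one_mul]
    rw [← this, hD, Matrix.diagonal_mul_diagonal, Matrix.trace_diagonal]
    simp [pow_two]
  have h2 : (∑ a : n, ∑ b : n, (‖X a b‖ : ℝ) ^ 2) = ∑ i, (lam i) ^ 2 := by
    have hC : ((∑ a : n, ∑ b : n, (‖X a b‖ : ℝ) ^ 2 : ℝ) : ℂ) = Matrix.trace (X * Xᴴ) := by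
      push_cast
      rw [Matrix.trace]
      simp only [Matrix.diag_apply, Matrix.mul_apply, Matrix.conjTranspose_apply]
      exact Finset.sum_congr rfl fun a _ => Finset.sum_congr rfl fun b _ => csq
    have : Matrix.trace (X * Xᴴ) = ∑ i, ((lam i : ℂ)) ^ 2 := by
      rw [hX.1.eq, hXX]  -- Xᴴ = X ?
    rw [this] at hC
    exact_mod_cast hC
  rw [h2]
  have hnn : ∀ i, 0 ≤ lam i := hX.eigenvalues_nonneg
  calc ∑ i, lam i ^ 2 ≤ ∑ i, lam i * ∑ j, lam j := by
        refine Finset.sum_le_sum fun i _ => ?_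
        rw [pow_two]
        exact mul_le_mul_of_nonneg_left
          (Finset.single_le_sum (fun j _ => hnn j) (Finset.mem_univ i)) (hnn i)
    _ = 1 := by rw [← Finset.sum_mul, h1]; norm_num

lemma kyFanNorm_rank_one_sum {I J S : Type*} [Fintype I] [Fintype J] [Fintype S] [DecidableEq J]
    (x : S → I → ℂ) (y : S → J → ℂ) :
    kyFanNorm (Matrix.of fun p q => ∑ s, x s p * y s q) ≤
      ∑ s, Real.sqrt (∑ i, ‖x s i‖ ^ 2) * Real.sqrt (∑ j, ‖y s j‖ ^ 2) := by
  classical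
  set M : Matrix I J ℂ := Matrix.of fun p q => ∑ s, x s p * y s q with hM
  have hH : (Mᴴ * M).PosSemidef := Matrix.posSemidef_conjTranspose_mul_self M
  set lam : J → ℝ := hH.1.eigenvalues with hlam
  have hlamnn : ∀ j, 0 ≤ lam j := hH.eigenvalues_nonneg
  set v : J → (J → ℂ) := fun j => ⇑(hH.1.eigenvectorBasis j) with hv
  -- eigenvector equation
  have heig : ∀ j, (Mᴴ * M) *ᵥ v j = (lam j : ℂ) • v j := by
    intro j
    have := hH.1.mulVec_eigenvectorBasis j
    rw [hv]
    convert this using 1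
    exact (RCLike.real_smul_eq_coe_smul (K := ℂ) _ _).symm
  -- orthonormality of the v's
  have hvorth : ∀ i j, dotProduct (star (v i)) (v j) = if i = j then 1 else 0 := by
    intro i j
    have := (orthonormal_iff_ite.mp hH.1.eigenvectorBasis.orthonormal) i j
    rwa [EuclideanSpace.inner_eq_star_dotProduct, dotProduct_comm] at this
  -- inner products of images
  have hMv : ∀ i j, dotProduct (star (M *ᵥ v i)) (M *ᵥ v j)
      = (lam j : ℂ) * (if i = j then 1 else 0) := by
    intro i j
    rw [Matrix.star_mulVec, ← Matrix.dotProduct_mulVec, Matrix.mulVec_mulVec, heig j,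
      dotProduct_smul, hvorth i j, smul_eq_mul]
  -- the filtered index set and normalized image vectors
  set t : Finset J := Finset.univ.filter (fun j => lam j ≠ 0) with ht
  set u : J → (I → ℂ) := fun j => (((Real.sqrt (lam j) : ℝ) : ℂ))⁻¹ • (M *ᵥ v j) with hu
  have hsq : ∀ j ∈ t, Real.sqrt (lam j) * Real.sqrt (lam j) = lam j := by
    intro j hj
    exact Real.mul_self_sqrt (hlamnn j)
  have hsne : ∀ j ∈ t, Real.sqrt (lam j) ≠ 0 := by
    intro j hj
    rw [ht, Finset.mem_filter] at hj
    exact ne_of_gt (Real.sqrt_pos.mpr (lt_of_le_of_ne (hlamnn j) (Ne.symm hj.2)))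
  have huorth : ∀ i ∈ t, ∀ j ∈ t,
      dotProduct (star (u i)) (u j) = if i = j then 1 else 0 := by
    intro i hi j hj
    rw [hu]
    simp only [star_smul, smul_dotProduct, dotProduct_smul, smul_eq_mul, hMv i j]
    rw [star_inv₀]
    split_ifs with h
    · subst h
      have h1 : (starRingEnd ℂ) ((Real.sqrt (lam i) : ℂ)) = (Real.sqrt (lam i) : ℂ) :=
        Complex.conj_ofReal _
      rw [show star ((Real.sqrt (lam i) : ℂ)) = (Real.sqrt (lam i) : ℂ) from h1]
      have h2 : ((Real.sqrt (lam i) : ℂ)) ≠ 0 := by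
        exact_mod_cast hsne i hi
      field_simp
      norm_cast
      rw [sq, hsq i hi]
    · simp
  have hukey : ∀ j ∈ t, dotProduct (star (u j)) (M *ᵥ v j) = ((Real.sqrt (lam j) : ℝ) : ℂ) := by
    intro j hj
    rw [hu]
    simp only [star_smul, smul_dotProduct, smul_eq_mul, hMv j j, if_pos rfl, mul_one]
    rw [star_inv₀, show star ((Real.sqrt (lam j) : ℂ)) = ((Real.sqrt (lam j) :ℝ): ℂ) from Complex.conj_ofReal _]
    have h2 : (((Real.sqrt (lam j) : ℝ)) : ℂ) ≠ 0 := by exact_mod_cast hsne j hj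
    field_simp
    norm_cast
    rw [sq, hsq j hj]; simp
  have hexpand : ∀ j, dotProduct (star (u j)) (M *ᵥ v j)
      = ∑ s, (∑ p, star (u j p) * x s p) * (∑ q, y s q * v j q) := by
    intro j
    show ∑ p, star (u j) p * (∑ q, M p q * v j q) = _
    calc ∑ p, star (u j) p * (∑ q, M p q * v j q)
        = ∑ p, ∑ q, ∑ s, star (u j p) * x s p * (y s q * v j q) := by
          refine Finset.sum_congr rfl fun p _ => ?_
          rw [Finset.mul_sum]
          refine Finset.sum_congr rfl fun q _ => ?_
          rw [hM]
          show star (u j p) * ((∑ s, x s p * y s q) * v j q) = _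
          rw [Finset.sum_mul, Finset.mul_sum]
          refine Finset.sum_congr rfl fun s _ => by ring
      _ = ∑ s, ∑ p, ∑ q, star (u j p) * x s p * (y s q * v j q) := by
          refine (Finset.sum_congr rfl fun p _ => Finset.sum_comm).trans Finset.sum_comm
      _ = ∑ s, (∑ p, star (u j p) * x s p) * (∑ q, y s q * v j q) := by
          refine Finset.sum_congr rfl fun s _ => ?_
          rw [Finset.sum_mul_sum]
  -- Bessel inequalities
  have hB1 : ∀ s, ∑ j ∈ t, ‖∑ p, star (u j p) * x s p‖ ^ 2 ≤ ∑ i, ‖x s i‖ ^ 2 := by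
    intro s
    have hw : Orthonormal ℂ (fun j : ↥t => (WithLp.equiv 2 (I → ℂ)).symm (u j.1)) := by
      rw [orthonormal_iff_ite]
      intro i j
      rw [WithLp.equiv_symm_apply, EuclideanSpace.inner_toLp_toLp, dotProduct_comm, huorth i.1 i.2 j.1 j.2]
      by_cases h : i = j
      · simp [h]
      · rw [if_neg h, if_neg (fun hc => h (Subtype.ext hc))]
    have hb := hw.sum_inner_products_le (x := (WithLp.equiv 2 (I → ℂ)).symm (x s))
      (s := Finset.univ)
    simp only [WithLp.equiv_symm_apply, EuclideanSpace.inner_toLp_toLp, dotProduct_comm (x s)] at hb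
    have hnorm : ‖(WithLp.equiv 2 (I → ℂ)).symm (x s)‖ ^ 2 = ∑ i, ‖x s i‖ ^ 2 := by
      rw [EuclideanSpace.norm_eq]
      rw [Real.sq_sqrt (Finset.sum_nonneg fun i _ => sq_nonneg _)]
      rfl
    simp only [WithLp.equiv_symm_apply] at hnorm
    rw [hnorm] at hb
    calc ∑ j ∈ t, ‖∑ p, star (u j p) * x s p‖ ^ 2
        = ∑ j : ↥t, ‖dotProduct (star (u j.1)) (x s)‖ ^ 2 := by
          rw [Finset.sum_coe_sort t (fun j => ‖dotProduct (star (u j)) (x s)‖ ^ 2)]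
          exact Finset.sum_congr rfl fun j _ => by rfl
      _ ≤ ∑ i, ‖x s i‖ ^ 2 := hb
  have hB2 : ∀ s, ∑ j ∈ t, ‖∑ q, y s q * v j q‖ ^ 2 ≤ ∑ q, ‖y s q‖ ^ 2 := by
    intro s
    have hb := hH.1.eigenvectorBasis.orthonormal.sum_inner_products_le
      (x := (WithLp.equiv 2 (J → ℂ)).symm (star (y s))) (s := t)
    have hinner : ∀ j, (inner ℂ (hH.1.eigenvectorBasis j) ((WithLp.equiv 2 (J → ℂ)).symm (star (y s))) : ℂ)
        = (starRingEnd ℂ) (∑ q, y s q * v j q) := by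
      intro j
      rw [show (hH.1.eigenvectorBasis j : EuclideanSpace ℂ J)
          = (WithLp.equiv 2 (J → ℂ)).symm (v j) from rfl]
      rw [WithLp.equiv_symm_apply, EuclideanSpace.inner_toLp_toLp, dotProduct_comm, dotProduct, map_sum]
      refine Finset.sum_congr rfl fun q _ => ?_
      simp only [Pi.star_apply, map_mul, Complex.conj_conj, RCLike.star_def]
      ring
    have hnorm : ‖(WithLp.equiv 2 (J → ℂ)).symm (star (y s))‖ ^ 2 = ∑ q, ‖y s q‖ ^ 2 := by
      rw [EuclideanSpace.norm_eq, Real.sq_sqrt (Finset.sum_nonneg fun i _ => sq_nonneg _)]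
      refine Finset.sum_congr rfl fun q _ => ?_
      simp [Pi.star_apply]
    calc ∑ j ∈ t, ‖∑ q, y s q * v j q‖ ^ 2
        = ∑ j ∈ t, ‖(inner ℂ (hH.1.eigenvectorBasis j) ((WithLp.equiv 2 (J → ℂ)).symm (star (y s))) : ℂ)‖ ^ 2 := by
          refine Finset.sum_congr rfl fun j _ => ?_
          rw [hinner j, RCLike.norm_conj]
      _ ≤ ‖(WithLp.equiv 2 (J → ℂ)).symm (star (y s))‖ ^ 2 := hb
      _ = ∑ q, ‖y s q‖ ^ 2 := hnorm
  -- put it all together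
  have hstart : kyFanNorm M = ∑ j, Real.sqrt (lam j) := trace_psd_sqrt hH
  rw [hstart]
  have hfilter : ∑ j, Real.sqrt (lam j) = ∑ j ∈ t, Real.sqrt (lam j) := by
    refine (Finset.sum_subset (ht ▸ Finset.filter_subset _ _) ?_).symm
    intro j _ hj
    rw [ht, Finset.mem_filter] at hj
    push_neg at hj
    rw [hj (Finset.mem_univ j), Real.sqrt_zero]
  rw [hfilter]
  have hre : ∑ j ∈ t, Real.sqrt (lam j)
      = (∑ s, ∑ j ∈ t, (∑ p, star (u j p) * x s p) * (∑ q, y s q * v j q)).re := by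
    rw [← Finset.sum_comm]
    rw [show ∑ j ∈ t, ∑ s, (∑ p, star (u j p) * x s p) * (∑ q, y s q * v j q)
        = ∑ j ∈ t, dotProduct (star (u j)) (M *ᵥ v j) from
      Finset.sum_congr rfl fun j _ => (hexpand j).symm]
    rw [Complex.re_sum]
    refine Finset.sum_congr rfl fun j hj => ?_
    rw [hukey j hj, Complex.ofReal_re]
  rw [hre]
  calc (∑ s, ∑ j ∈ t, (∑ p, star (u j p) * x s p) * (∑ q, y s q * v j q)).re
      ≤ ∑ s, ‖∑ j ∈ t, (∑ p, star (u j p) * x s p) * (∑ q, y s q * v j q)‖ := by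
        rw [Complex.re_sum]
        refine Finset.sum_le_sum fun s _ => ?_
        exact Complex.re_le_norm _
    _ ≤ ∑ s, Real.sqrt (∑ i, ‖x s i‖ ^ 2) * Real.sqrt (∑ j, ‖y s j‖ ^ 2) := by
        refine Finset.sum_le_sum fun s _ => ?_
        calc ‖∑ j ∈ t, (∑ p, star (u j p) * x s p) * (∑ q, y s q * v j q)‖
            ≤ ∑ j ∈ t, ‖(∑ p, star (u j p) * x s p)‖ * ‖(∑ q, y s q * v j q)‖ := by
              refine (norm_sum_le _ _).trans (le_of_eq ?_)
              exact Finset.sum_congr rfl fun j _ => norm_mul _ _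
          _ ≤ Real.sqrt (∑ j ∈ t, ‖(∑ p, star (u j p) * x s p)‖ ^ 2) *
              Real.sqrt (∑ j ∈ t, ‖(∑ q, y s q * v j q)‖ ^ 2) :=
              Real.sum_mul_le_sqrt_mul_sqrt _ _ _
          _ ≤ Real.sqrt (∑ i, ‖x s i‖ ^ 2) * Real.sqrt (∑ j, ‖y s j‖ ^ 2) := by
              exact mul_le_mul (Real.sqrt_le_sqrt (hB1 s)) (Real.sqrt_le_sqrt (hB2 s))
                (Real.sqrt_nonneg _) (Real.sqrt_nonneg _)

lemma weyl_col_bound {d : ℕ} [NeZero d] {X : Matrix (ZMod d) (ZMod d) ℂ}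
    (hX : X.PosSemidef) (ht : X.trace = 1) :
    ∑ p : {p : ZMod d × ZMod d // p ≠ 0}, ‖Matrix.trace (X * (Weyl d p.1.1 p.1.2)ᴴ)‖ ^ 2
      ≤ (d : ℝ) - 1 := by
  classical
  have hall := weyl_parseval X
  set f : ZMod d × ZMod d → ℝ := fun p => ‖Matrix.trace (X * (Weyl d p.1 p.2)ᴴ)‖ ^ 2 with hf
  have hzero : f 0 = 1 := by
    rw [hf]
    show ‖Matrix.trace (X * (Weyl d 0 0)ᴴ)‖ ^ 2 = 1
    rw [trace_mul_weyl_zero, ht]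
    norm_num
  have h1 : ∑ p : {p : ZMod d × ZMod d // p ≠ 0}, f p.1
      = ∑ p ∈ Finset.univ.erase (0 : ZMod d × ZMod d), f p := by
    rw [← Finset.filter_ne']
    exact (Finset.sum_subtype _ (by simp) f).symm
  have h2 := Finset.sum_erase_add Finset.univ f (Finset.mem_univ (0 : ZMod d × ZMod d))
  have hF : ∑ a, ∑ b, ‖X a b‖ ^ 2 ≤ 1 := frobenius_le_one hX ht
  have hFnn : (0:ℝ) ≤ ∑ a, ∑ b, ‖X a b‖ ^ 2 :=
    Finset.sum_nonneg fun a _ => Finset.sum_nonneg fun b _ => sq_nonneg _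
  have hd : (1:ℝ) ≤ d := by
    have := Nat.one_le_iff_ne_zero.mpr (NeZero.ne d); exact_mod_cast this
  have h3 : ∑ p ∈ Finset.univ.erase (0 : ZMod d × ZMod d), f p + 1 = ∑ p, f p := by
    rw [← hzero]
    exact h2
  have hkey : ∑ p : {p : ZMod d × ZMod d // p ≠ 0}, f p.1
      = (d : ℝ) * (∑ a, ∑ b, ‖X a b‖ ^ 2) - 1 := by
    rw [h1]
    linarith [h3, hall]
  rw [show (∑ p : {p : ZMod d × ZMod d // p ≠ 0},
      ‖Matrix.trace (X * (Weyl d p.1.1 p.1.2)ᴴ)‖ ^ 2)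
      = ∑ p : {p : ZMod d × ZMod d // p ≠ 0}, f p.1 from rfl, hkey]
  nlinarith [hF, hFnn, hd]


end Aux

/-- if a bipartite density matrix `ρ` is separable, then the Ky Fan norm
of its correlation matrix satisfies `‖M‖_KF ≤ √((d_A − 1)(d_B − 1))`. -/
theorem separable_corr_kyfan_le (dA dB : ℕ) [NeZero dA] [NeZero dB]
    (hA : 2 ≤ dA) (hB : 2 ≤ dB)
    (ρ : Matrix (ZMod dA × ZMod dB) (ZMod dA × ZMod dB) ℂ)
    (hpsd : ρ.PosSemidef) (htr : ρ.trace = 1)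
    (hsep : SeparableState dA dB ρ) :
    kyFanNorm (corrMatrix dA dB ρ) ≤ Real.sqrt (((dA : ℝ) - 1) * ((dB : ℝ) - 1)) := by
  classical
  obtain ⟨N, w, A, B, hw, hwsum, hAs, hBs, hρ⟩ := hsep
  set x : Fin N → {p : ZMod dA × ZMod dA // p ≠ 0} → ℂ :=
    fun s p => (w s : ℂ) * Matrix.trace (A s * (Weyl dA p.1.1 p.1.2)ᴴ) with hx
  set y : Fin N → {q : ZMod dB × ZMod dB // q ≠ 0} → ℂ :=
    fun s q => Matrix.trace (B s * (Weyl dB q.1.1 q.1.2)ᴴ) with hy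
  have hcorr : corrMatrix dA dB ρ = Matrix.of (fun p q => ∑ s, x s p * y s q) := by
    ext p q
    show Matrix.trace (ρ * ((Weyl dA p.1.1 p.1.2)ᴴ ⊗ₖ (Weyl dB q.1.1 q.1.2)ᴴ)) = _
    rw [hρ, Finset.sum_mul, Matrix.trace_sum, Matrix.of_apply]
    refine Finset.sum_congr rfl fun s _ => ?_
    rw [smul_mul_assoc, Matrix.trace_smul, ← Matrix.mul_kronecker_mul, Matrix.trace_kronecker,
      hx, hy]
    simp only [smul_eq_mul]
    ring
  rw [hcorr]
  refine (kyFanNorm_rank_one_sum x y).trans ?_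
  have hdA1 : (0:ℝ) ≤ (dA : ℝ) - 1 := by
    have : (2:ℝ) ≤ dA := by exact_mod_cast hA
    linarith
  have hdB1 : (0:ℝ) ≤ (dB : ℝ) - 1 := by
    have : (2:ℝ) ≤ dB := by exact_mod_cast hB
    linarith
  have hxs : ∀ s, Real.sqrt (∑ p, ‖x s p‖ ^ 2) ≤ w s * Real.sqrt ((dA:ℝ) - 1) := by
    intro s
    have hxsum : ∑ p, ‖x s p‖ ^ 2 = (w s) ^ 2 *
        ∑ p : {p : ZMod dA × ZMod dA // p ≠ 0},
          ‖Matrix.trace (A s * (Weyl dA p.1.1 p.1.2)ᴴ)‖ ^ 2 := by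
      rw [Finset.mul_sum]
      refine Finset.sum_congr rfl fun p _ => ?_
      rw [hx]
      simp only [norm_mul, mul_pow, Complex.norm_real, Real.norm_eq_abs, sq_abs]
    rw [hxsum, Real.sqrt_mul (sq_nonneg _), Real.sqrt_sq (hw s)]
    exact mul_le_mul_of_nonneg_left
      (Real.sqrt_le_sqrt (weyl_col_bound (hAs s).1 (hAs s).2)) (hw s)
  have hys : ∀ s, Real.sqrt (∑ q, ‖y s q‖ ^ 2) ≤ Real.sqrt ((dB:ℝ) - 1) := by
    intro s
    exact Real.sqrt_le_sqrt (weyl_col_bound (hBs s).1 (hBs s).2)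
  calc ∑ s, Real.sqrt (∑ p, ‖x s p‖ ^ 2) * Real.sqrt (∑ q, ‖y s q‖ ^ 2)
      ≤ ∑ s, (w s * Real.sqrt ((dA:ℝ) - 1)) * Real.sqrt ((dB:ℝ) - 1) := by
        refine Finset.sum_le_sum fun s _ => ?_
        exact mul_le_mul (hxs s) (hys s) (Real.sqrt_nonneg _)
          (mul_nonneg (hw s) (Real.sqrt_nonneg _))
    _ = (∑ s, w s) * (Real.sqrt ((dA:ℝ) - 1) * Real.sqrt ((dB:ℝ) - 1)) := by
        rw [← Finset.sum_mul, ← Finset.sum_mul, mul_assoc]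
    _ = Real.sqrt (((dA : ℝ) - 1) * ((dB : ℝ) - 1)) := by
        rw [hwsum, one_mul, ← Real.sqrt_mul hdA1]
end

section
/- If the Bell-diagonal two-qubit state ρ = (1/4)·(I ⊗ I + ∑_{i=1}^{3} t_i·σ_i ⊗ σ_i), where σ_1, σ_2, σ_3 are the Pauli matrices, t_1, t_2, t_3 ∈ ℝ, and ρ is a density matrix, is separable, then |t_1| + |t_2| + |t_3| ≤ 1. -/
open scoped Matrix ComplexOrder Kronecker

/-- The Pauli matrix `σ₁`. -/
def pauli1 : Matrix (ZMod 2) (ZMod 2) ℂ :=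
  Matrix.of fun i j => if i = j then 0 else 1

/-- The Pauli matrix `σ₂`. -/
def pauli2 : Matrix (ZMod 2) (ZMod 2) ℂ :=
  Matrix.of fun i j =>
    if i = j then 0 else if i = 0 then -Complex.I else Complex.I

/-- The Pauli matrix `σ₃`. -/
def pauli3 : Matrix (ZMod 2) (ZMod 2) ℂ :=
  Matrix.of fun i j => if i = j then (if i = 0 then 1 else -1) else 0

lemma sum_zmod2 (f : ZMod 2 → ℂ) : ∑ i, f i = f 0 + f 1 := Fin.sum_univ_two f

lemma quad_form (A : Matrix (ZMod 2) (ZMod 2) ℂ) (hA : A.PosSemidef) (x : ZMod 2 → ℂ) :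
    0 ≤ (starRingEnd ℂ) (x 0) * (A 0 0 * x 0 + A 0 1 * x 1)
      + (starRingEnd ℂ) (x 1) * (A 1 0 * x 0 + A 1 1 * x 1) := by
  have h := hA.dotProduct_mulVec_nonneg x
  simpa [dotProduct, Matrix.mulVec, sum_zmod2, mul_add] using h

lemma herm01 (A : Matrix (ZMod 2) (ZMod 2) ℂ) (hA : A.PosSemidef) :
    A 1 0 = (starRingEnd ℂ) (A 0 1) := by
  have := hA.1
  have h := congrFun (congrFun this.symm 1) 0
  simpa [Matrix.conjTranspose_apply] using h

lemma trace2 (A : Matrix (ZMod 2) (ZMod 2) ℂ) : A.trace = A 0 0 + A 1 1 := by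
  simp [Matrix.trace, Matrix.diag, sum_zmod2]

lemma bloch (A : Matrix (ZMod 2) (ZMod 2) ℂ) (hA : A.PosSemidef) (htr : A.trace = 1) :
    ∃ a₁ a₂ a₃ : ℝ, (A * pauli1).trace = (a₁ : ℂ) ∧ (A * pauli2).trace = (a₂ : ℂ) ∧
      (A * pauli3).trace = (a₃ : ℂ) ∧ a₁ ^ 2 + a₂ ^ 2 + a₃ ^ 2 ≤ 1 := by
  set p := (A 0 0).re with hp
  set q := (A 1 1).re with hq
  set c := A 0 1 with hc
  -- diagonal entries are real nonneg
  have h00 : (0 : ℂ) ≤ A 0 0 := by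
    have h := quad_form A hA (fun i => if i = 0 then 1 else 0)
    simpa using h
  have h11 : (0 : ℂ) ≤ A 1 1 := by
    have h := quad_form A hA (fun i => if i = 0 then 0 else 1)
    simpa using h
  have hA00 : A 0 0 = (p : ℂ) := by
    have := (Complex.le_def.mp h00).2
    exact Complex.ext rfl (by simpa using this.symm)
  have hA11 : A 1 1 = (q : ℂ) := by
    have := (Complex.le_def.mp h11).2
    exact Complex.ext rfl (by simpa using this.symm)
  have hp0 : 0 ≤ p := (Complex.le_def.mp h00).1
  have hq0 : 0 ≤ q := (Complex.le_def.mp h11).1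
  have h10 : A 1 0 = (starRingEnd ℂ) c := herm01 A hA
  -- trace = 1
  have hpq : p + q = 1 := by
    have := trace2 A ▸ htr
    rw [hA00, hA11] at this
    exact_mod_cast this
  -- |c|^2 ≤ pq
  set m := Complex.normSq c with hm
  have key1 : 0 ≤ q * (p * q - m) := by
    have h := quad_form A hA (fun i => if i = 0 then (q : ℂ) else -(starRingEnd ℂ) c)
    simp only [if_pos rfl, if_neg one_ne_zero, if_true] at h
    rw [hA00, hA11, h10, ← hc] at h
    have : (starRingEnd ℂ) (q:ℂ) * ((p:ℂ) * q + c * -(starRingEnd ℂ) c)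
        + (starRingEnd ℂ) (-(starRingEnd ℂ) c) * ((starRingEnd ℂ) c * q + (q:ℂ) * -(starRingEnd ℂ) c)
        = ((q * (p * q - m) : ℝ) : ℂ) := by
      simp [Complex.normSq_eq_conj_mul_self, hm]
      push_cast
      ring
    rw [this] at h
    exact_mod_cast h
  have key2 : 0 ≤ p * (p * q - m) := by
    have h := quad_form A hA (fun i => if i = 0 then -c else (p : ℂ))
    simp only [if_pos rfl, if_neg one_ne_zero, if_true] at h
    rw [hA00, hA11, h10, ← hc] at h
    have : (starRingEnd ℂ) (-c) * ((p:ℂ) * -c + c * p)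
        + (starRingEnd ℂ) (p:ℂ) * ((starRingEnd ℂ) c * -c + (q:ℂ) * p)
        = ((p * (p * q - m) : ℝ) : ℂ) := by
      simp [Complex.normSq_eq_conj_mul_self, hm]
      push_cast
      ring
    rw [this] at h
    exact_mod_cast h
  have hmpq : m ≤ p * q := by nlinarith [key1, key2, hpq]
  -- compute the traces
  refine ⟨2 * c.re, -2 * c.im, p - q, ?_, ?_, ?_, ?_⟩
  · rw [trace2]
    simp [Matrix.mul_apply, sum_zmod2, pauli1, h10, ← hc]
    rw [Complex.ext_iff]
    constructor <;> simp [Complex.add_re, Complex.add_im] <;> ring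
  · rw [trace2]
    simp [Matrix.mul_apply, sum_zmod2, pauli2, h10, ← hc]
    rw [Complex.ext_iff]
    constructor <;> simp [Complex.mul_re, Complex.mul_im] <;> ring
  · rw [trace2]
    simp [Matrix.mul_apply, sum_zmod2, pauli3, hA00, hA11]
    push_cast
    ring
  · have hm' : m = c.re ^ 2 + c.im ^ 2 := by
      simp [hm, Complex.normSq_apply]; ring
    nlinarith [hmpq, hpq, hm']

lemma trP1 : pauli1.trace = 0 := by rw [trace2]; simp [pauli1]
lemma trP2 : pauli2.trace = 0 := by rw [trace2]; simp [pauli2]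
lemma trP3 : pauli3.trace = 0 := by rw [trace2]; simp [pauli3]
lemma trP11 : (pauli1 * pauli1).trace = 2 := by
  rw [trace2]; simp [Matrix.mul_apply, sum_zmod2, pauli1]; ring
lemma trP22 : (pauli2 * pauli2).trace = 2 := by
  rw [trace2]; simp [Matrix.mul_apply, sum_zmod2, pauli2]; ring_nf
lemma trP33 : (pauli3 * pauli3).trace = 2 := by
  rw [trace2]; simp [Matrix.mul_apply, sum_zmod2, pauli3]; ring
lemma trP12 : (pauli1 * pauli2).trace = 0 := by
  rw [trace2]; simp [Matrix.mul_apply, sum_zmod2, pauli1, pauli2]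
lemma trP13 : (pauli1 * pauli3).trace = 0 := by
  rw [trace2]; simp [Matrix.mul_apply, sum_zmod2, pauli1, pauli3]
lemma trP21 : (pauli2 * pauli1).trace = 0 := by
  rw [trace2]; simp [Matrix.mul_apply, sum_zmod2, pauli1, pauli2]
lemma trP23 : (pauli2 * pauli3).trace = 0 := by
  rw [trace2]; simp [Matrix.mul_apply, sum_zmod2, pauli2, pauli3]
lemma trP31 : (pauli3 * pauli1).trace = 0 := by
  rw [trace2]; simp [Matrix.mul_apply, sum_zmod2, pauli1, pauli3]
lemma trP32 : (pauli3 * pauli2).trace = 0 := by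
  rw [trace2]; simp [Matrix.mul_apply, sum_zmod2, pauli2, pauli3]

lemma absbound (a₁ a₂ a₃ b₁ b₂ b₃ : ℝ) (ha : a₁^2+a₂^2+a₃^2 ≤ 1) (hb : b₁^2+b₂^2+b₃^2 ≤ 1) :
    |a₁*b₁| + |a₂*b₂| + |a₃*b₃| ≤ 1 := by
  have h1 : |a₁*b₁| ≤ (a₁^2+b₁^2)/2 := by
    rw [abs_mul]; nlinarith [sq_nonneg (|a₁|-|b₁|), sq_abs a₁, sq_abs b₁]
  have h2 : |a₂*b₂| ≤ (a₂^2+b₂^2)/2 := by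
    rw [abs_mul]; nlinarith [sq_nonneg (|a₂|-|b₂|), sq_abs a₂, sq_abs b₂]
  have h3 : |a₃*b₃| ≤ (a₃^2+b₃^2)/2 := by
    rw [abs_mul]; nlinarith [sq_nonneg (|a₃|-|b₃|), sq_abs a₃, sq_abs b₃]
  linarith

/-- if the Bell-diagonal two-qubit state
`ρ = (1/4)(I ⊗ I + ∑ᵢ tᵢ σᵢ ⊗ σᵢ)` is a separable density matrix, then
`|t₁| + |t₂| + |t₃| ≤ 1`. -/
theorem bell_diagonal_separable (t₁ t₂ t₃ : ℝ)
    (ρ : Matrix (ZMod 2 × ZMod 2) (ZMod 2 × ZMod 2) ℂ)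
    (hρ : ρ = (4 : ℂ)⁻¹ •
      ((1 : Matrix (ZMod 2) (ZMod 2) ℂ) ⊗ₖ (1 : Matrix (ZMod 2) (ZMod 2) ℂ) +
        (t₁ : ℂ) • (pauli1 ⊗ₖ pauli1) + (t₂ : ℂ) • (pauli2 ⊗ₖ pauli2) +
        (t₃ : ℂ) • (pauli3 ⊗ₖ pauli3)))
    (hpsd : ρ.PosSemidef) (htr : ρ.trace = 1)
    (hsep : SeparableState 2 2 ρ) :
    |t₁| + |t₂| + |t₃| ≤ 1 := by
  obtain ⟨N, w, A, B, hw0, hw1, hAs, hBs, hEq⟩ := hsep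
  choose a₁ a₂ a₃ ha1 ha2 ha3 hane using fun s => bloch (A s) (hAs s).1 (hAs s).2
  choose b₁ b₂ b₃ hb1 hb2 hb3 hbne using fun s => bloch (B s) (hBs s).1 (hBs s).2
  have key : ∀ (P : Matrix (ZMod 2) (ZMod 2) ℂ),
      (ρ * (P ⊗ₖ P)).trace = ∑ s, (w s : ℂ) * ((A s * P).trace * (B s * P).trace) := by
    intro P
    rw [hEq, Finset.sum_mul, Matrix.trace_sum]
    congr 1; funext s
    rw [Matrix.smul_mul, Matrix.trace_smul, ← Matrix.mul_kronecker_mul,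
      Matrix.trace_kronecker, smul_eq_mul]
  have L1 : (ρ * (pauli1 ⊗ₖ pauli1)).trace = (t₁ : ℂ) := by
    rw [hρ, Matrix.smul_mul, Matrix.trace_smul, Matrix.add_mul, Matrix.add_mul,
      Matrix.add_mul, Matrix.smul_mul, Matrix.smul_mul, Matrix.smul_mul,
      ← Matrix.mul_kronecker_mul, ← Matrix.mul_kronecker_mul, ← Matrix.mul_kronecker_mul,
      ← Matrix.mul_kronecker_mul]
    simp [Matrix.trace_add, Matrix.trace_smul, Matrix.trace_kronecker,
      trP1, trP11, trP21, trP31]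
    ring
  have L2 : (ρ * (pauli2 ⊗ₖ pauli2)).trace = (t₂ : ℂ) := by
    rw [hρ, Matrix.smul_mul, Matrix.trace_smul, Matrix.add_mul, Matrix.add_mul,
      Matrix.add_mul, Matrix.smul_mul, Matrix.smul_mul, Matrix.smul_mul,
      ← Matrix.mul_kronecker_mul, ← Matrix.mul_kronecker_mul, ← Matrix.mul_kronecker_mul,
      ← Matrix.mul_kronecker_mul]
    simp [Matrix.trace_add, Matrix.trace_smul, Matrix.trace_kronecker,
      trP2, trP22, trP12, trP32]
    ring
  have L3 : (ρ * (pauli3 ⊗ₖ pauli3)).trace = (t₃ : ℂ) := by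
    rw [hρ, Matrix.smul_mul, Matrix.trace_smul, Matrix.add_mul, Matrix.add_mul,
      Matrix.add_mul, Matrix.smul_mul, Matrix.smul_mul, Matrix.smul_mul,
      ← Matrix.mul_kronecker_mul, ← Matrix.mul_kronecker_mul, ← Matrix.mul_kronecker_mul,
      ← Matrix.mul_kronecker_mul]
    simp [Matrix.trace_add, Matrix.trace_smul, Matrix.trace_kronecker,
      trP3, trP33, trP13, trP23]
    ring
  have e1 : t₁ = ∑ s, w s * (a₁ s * b₁ s) := by
    have h := L1.symm.trans (key pauli1)
    simp only [ha1, hb1] at h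
    exact_mod_cast h
  have e2 : t₂ = ∑ s, w s * (a₂ s * b₂ s) := by
    have h := L2.symm.trans (key pauli2)
    simp only [ha2, hb2] at h
    exact_mod_cast h
  have e3 : t₃ = ∑ s, w s * (a₃ s * b₃ s) := by
    have h := L3.symm.trans (key pauli3)
    simp only [ha3, hb3] at h
    exact_mod_cast h
  have h1 : |t₁| ≤ ∑ s, w s * |a₁ s * b₁ s| := by
    rw [e1]
    refine (Finset.abs_sum_le_sum_abs _ _).trans ?_
    refine Finset.sum_le_sum fun s _ => ?_
    rw [abs_mul, abs_of_nonneg (hw0 s)]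
  have h2 : |t₂| ≤ ∑ s, w s * |a₂ s * b₂ s| := by
    rw [e2]
    refine (Finset.abs_sum_le_sum_abs _ _).trans ?_
    refine Finset.sum_le_sum fun s _ => ?_
    rw [abs_mul, abs_of_nonneg (hw0 s)]
  have h3 : |t₃| ≤ ∑ s, w s * |a₃ s * b₃ s| := by
    rw [e3]
    refine (Finset.abs_sum_le_sum_abs _ _).trans ?_
    refine Finset.sum_le_sum fun s _ => ?_
    rw [abs_mul, abs_of_nonneg (hw0 s)]
  have step : ∑ s, w s * (|a₁ s * b₁ s| + |a₂ s * b₂ s| + |a₃ s * b₃ s|) ≤ 1 := by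
    calc ∑ s, w s * (|a₁ s * b₁ s| + |a₂ s * b₂ s| + |a₃ s * b₃ s|)
        ≤ ∑ s, w s * 1 :=
          Finset.sum_le_sum fun s _ =>
            mul_le_mul_of_nonneg_left (absbound _ _ _ _ _ _ (hane s) (hbne s)) (hw0 s)
      _ = 1 := by simp [hw1]
  have expand : ∑ s, w s * (|a₁ s * b₁ s| + |a₂ s * b₂ s| + |a₃ s * b₃ s|)
      = (∑ s, w s * |a₁ s * b₁ s|) + (∑ s, w s * |a₂ s * b₂ s|) + (∑ s, w s * |a₃ s * b₃ s|) := by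
    rw [← Finset.sum_add_distrib, ← Finset.sum_add_distrib]
    exact Finset.sum_congr rfl fun s _ => by ring
  linarith [step, expand ▸ step, h1, h2, h3, expand]
end
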